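/- arXiv:2403.02492 — 3 statements merged into one kernel-verified Lean document; each statement's English description precedes it below -/
import Mathlib

section
/- If S ⊆ ℕ is Σ⁰₂ and S = [S], then there is a Π⁰₁ set T ⊆ ℕ with [T] = S. (This is the unrelativized instance of the paper's lemma, which is stated for an arbitrary oracle X.) -/
/-- The `e`-th computably enumerable subset of `ℕ`: the domain of the `e`-th partial
computable function. -/
def W (e : ℕ) : Set ℕ := {n | ((Denumerable.ofNat Nat.Partrec.Code e).eval n).Dom}

/-- A set `S ⊆ ℕ` is Σ⁰₃ if there is a computable predicate `R ⊆ ℕ⁴` with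
`n ∈ S ↔ ∃x ∀y ∃z, R n x y z`. -/
def IsSigma03 (S : Set ℕ) : Prop :=
  ∃ R : ℕ → ℕ → ℕ → ℕ → Bool,
    (Computable fun p : ℕ × ℕ × ℕ × ℕ => R p.1 p.2.1 p.2.2.1 p.2.2.2) ∧
    ∀ n, n ∈ S ↔ ∃ x, ∀ y, ∃ z, R n x y z = true

/-- A binary relation on `ℕ` is Σ⁰₃ if the corresponding set of codes of pairs
(under the standard computable pairing) is Σ⁰₃. -/
def Sigma03Rel (E : ℕ → ℕ → Prop) : Prop :=
  IsSigma03 {p : ℕ | E p.unpair.1 p.unpair.2}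

/-- `E` computably reduces to `F`: there is a total computable `Φ` with
`m E n ↔ Φ(m) F Φ(n)`. -/
def ComputableReduction (E F : ℕ → ℕ → Prop) : Prop :=
  ∃ Φ : ℕ → ℕ, Computable Φ ∧ ∀ m n, E m n ↔ F (Φ m) (Φ n)

/-- A set `S ⊆ ℕ` is Σ⁰₂ if there is a computable predicate `R ⊆ ℕ³` with
`n ∈ S ↔ ∃x ∀y, R n x y`. -/
def IsSigma02 (S : Set ℕ) : Prop :=
  ∃ R : ℕ → ℕ → ℕ → Bool,
    (Computable fun p : ℕ × ℕ × ℕ => R p.1 p.2.1 p.2.2) ∧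
    ∀ n, n ∈ S ↔ ∃ x, ∀ y, R n x y = true

/-- A set `T ⊆ ℕ` is Π⁰₁ if there is a computable predicate `R ⊆ ℕ²` with
`n ∈ T ↔ ∀x, R n x`. -/
def IsPi01 (T : Set ℕ) : Prop :=
  ∃ R : ℕ → ℕ → Bool,
    (Computable fun p : ℕ × ℕ => R p.1 p.2) ∧
    ∀ n, n ∈ T ↔ ∀ x, R n x = true

/-- `E` and `F` are computably equivalent: computable reductions exist in both directions. -/
def CeerEquiv (E F : ℕ → ℕ → Prop) : Prop :=
  ComputableReduction E F ∧ ComputableReduction F E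

/-- The fixed uniform enumeration of all ceers: `ceer i` is the equivalence relation
generated by the `i`-th c.e. set `W i` of coded pairs. -/
def ceer (i : ℕ) : ℕ → ℕ → Prop :=
  Relation.EqvGen fun m n => Nat.pair m n ∈ W i

/-- `[S]`: the closure of a set of indices of ceers under computable equivalence. -/
def ceerClosure (S : Set ℕ) : Set ℕ := {i | ∃ j ∈ S, CeerEquiv (ceer i) (ceer j)}

/-- An equivalence relation on `ℕ` has infinitely many classes iff there is an infinite
family of pairwise inequivalent elements. -/
def HasInfinitelyManyClasses (E : ℕ → ℕ → Prop) : Prop :=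
  ∃ f : ℕ → ℕ, ∀ m n, m ≠ n → ¬E (f m) (f n)

/-- `S` is proper on the infinite ceers: some ceer with infinitely many classes has its
index in `[S]` and some ceer with infinitely many classes has its index outside `[S]`. -/
def ProperOnInfiniteCeers (S : Set ℕ) : Prop :=
  ∃ i j, HasInfinitelyManyClasses (ceer i) ∧ HasInfinitelyManyClasses (ceer j) ∧
    i ∈ ceerClosure S ∧ j ∉ ceerClosure S


open Nat.Partrec (Code)
open Nat.Partrec.Code

/-- Padding codes: each evaluates to the identity. -/
def padCode : ℕ → Code
  | 0 => Code.id
  | x + 1 => Code.comp Code.id (padCode x)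

lemma eval_padCode (x n : ℕ) : (padCode x).eval n = Part.some n := by
  induction x with
  | zero => exact eval_id n
  | succ x ih => simp [padCode, eval, ih, Seq.seq]; exact (Part.bind_some _ _).trans (eval_id n)

def idN : ℕ := Encodable.encode Nat.Partrec.Code.id

def eN : ℕ → ℕ
  | 0 => idN
  | x + 1 => 4 * Nat.pair idN (eN x) + 6

lemma encode_comp (cf cg : Code) :
    Encodable.encode (Code.comp cf cg) =
      4 * Nat.pair (Encodable.encode cf) (Encodable.encode cg) + 6 := by
  simp only [encodeCode_eq, encodeCode]; ring

lemma eN_eq (x : ℕ) : eN x = Encodable.encode (padCode x) := by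
  induction x with
  | zero => rfl
  | succ x ih => rw [eN, padCode, encode_comp, ih]; rfl

lemma eN_strictMono : StrictMono eN := by
  apply strictMono_nat_of_lt_succ
  intro n
  calc eN n ≤ Nat.pair idN (eN n) := Nat.right_le_pair _ _
  _ < 4 * Nat.pair idN (eN n) + 6 := by omega

def pFun (n x : ℕ) : ℕ := 4 * Nat.pair n (eN x) + 6

lemma ofNat_pFun (n x : ℕ) :
    Denumerable.ofNat Code (pFun n x) = Code.comp (Denumerable.ofNat Code n) (padCode x) := by
  have h : pFun n x = Encodable.encode (Code.comp (Denumerable.ofNat Code n) (padCode x)) := by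
    rw [encode_comp, Denumerable.encode_ofNat, ← eN_eq]; rfl
  rw [h, Denumerable.ofNat_encode]

lemma W_pFun (n x : ℕ) : W (pFun n x) = W n := by
  ext m
  simp [W, ofNat_pFun, eval, eval_padCode]
  exact Iff.of_eq (congrArg Part.Dom (Part.bind_some _ _))

lemma ceer_pFun (n x : ℕ) : ceer (pFun n x) = ceer n := by
  unfold ceer; rw [W_pFun]

def nOf (m : ℕ) : ℕ := ((m - 6) / 4).unpair.1
def uOf (m : ℕ) : ℕ := ((m - 6) / 4).unpair.2
def xOf (m : ℕ) : ℕ := Nat.findGreatest (fun x => eN x = uOf m) (uOf m)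

lemma nOf_pFun (n x : ℕ) : nOf (pFun n x) = n := by
  simp [nOf, pFun, Nat.add_sub_cancel, Nat.mul_div_cancel_left]
lemma uOf_pFun (n x : ℕ) : uOf (pFun n x) = eN x := by
  simp [uOf, pFun, Nat.add_sub_cancel, Nat.mul_div_cancel_left]

lemma xOf_pFun (n x : ℕ) : xOf (pFun n x) = x := by
  unfold xOf
  rw [uOf_pFun]
  have hx : x ≤ eN x := eN_strictMono.le_apply
  have hspec := Nat.findGreatest_spec (P := fun x' => eN x' = eN x) hx rfl
  exact eN_strictMono.injective hspec
lemma primrec_eN : Primrec eN := by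
  have h : Primrec (fun x => Nat.rec idN (fun _ ih => 4 * Nat.pair idN ih + 6) x : ℕ → ℕ) :=
    Primrec.nat_rec₁ idN
      (Primrec.nat_add.comp (Primrec.nat_mul.comp (Primrec.const 4)
        (Primrec₂.natPair.comp (Primrec.const idN) Primrec.snd)) (Primrec.const 6)).to₂
  exact h.of_eq fun x => by induction x with
    | zero => rfl
    | succ x ih => simp [eN, ← ih]

lemma primrec_nOf : Primrec nOf :=
  (Primrec.fst.comp (Primrec.unpair.comp
    (Primrec.nat_div.comp (Primrec.nat_sub.comp .id (Primrec.const 6)) (Primrec.const 4))))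

lemma primrec_uOf : Primrec uOf :=
  (Primrec.snd.comp (Primrec.unpair.comp
    (Primrec.nat_div.comp (Primrec.nat_sub.comp .id (Primrec.const 6)) (Primrec.const 4))))

lemma primrec_xOf : Primrec xOf :=
  Primrec.nat_findGreatest primrec_uOf
    (Primrec.eq.comp (primrec_eN.comp Primrec.snd) (primrec_uOf.comp Primrec.fst))

lemma primrec_pOf : Primrec (fun m => pFun (nOf m) (xOf m)) := by
  unfold pFun
  exact Primrec.nat_add.comp (Primrec.nat_mul.comp (Primrec.const 4)
    (Primrec₂.natPair.comp primrec_nOf (primrec_eN.comp primrec_xOf))) (Primrec.const 6)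

lemma primrec_condB : Primrec (fun m => decide (m = pFun (nOf m) (xOf m))) :=
  (Primrec.eq.comp .id primrec_pOf).decide

lemma ceerEquiv_refl (E : ℕ → ℕ → Prop) : CeerEquiv E E :=
  ⟨⟨id, Computable.id, fun _ _ => Iff.rfl⟩, ⟨id, Computable.id, fun _ _ => Iff.rfl⟩⟩

/-- If `S` is Σ⁰₂ and `S = [S]`, then there is a Π⁰₁ set `T` with `[T] = S`. -/
theorem exists_Pi01_generating_set (S : Set ℕ) (hS : IsSigma02 S) (hcl : S = ceerClosure S) :
    ∃ T : Set ℕ, IsPi01 T ∧ ceerClosure T = S := by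
  obtain ⟨R, hRcomp, hRmem⟩ := hS
  refine ⟨{ m | ∃ n x, m = pFun n x ∧ ∀ y, R n x y = true }, ?_, ?_⟩
  · refine ⟨fun m y => (decide (m = pFun (nOf m) (xOf m))) && R (nOf m) (xOf m) y, ?_, ?_⟩
    · have hc : Computable fun p : ℕ × ℕ => decide (p.1 = pFun (nOf p.1) (xOf p.1)) :=
        (primrec_condB.comp Primrec.fst).to_comp
      have ht : Computable fun p : ℕ × ℕ => R (nOf p.1) (xOf p.1) p.2 :=
        hRcomp.comp (((primrec_nOf.comp Primrec.fst).to_comp).pair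
          (((primrec_xOf.comp Primrec.fst).to_comp).pair Computable.snd))
      exact (Computable.cond hc ht (Computable.const false)).of_eq fun p => by
        cases h : decide (p.1 = pFun (nOf p.1) (xOf p.1)) <;> simp [h]
    · intro m
      constructor
      · rintro ⟨n, x, rfl, hall⟩ y
        simp [nOf_pFun, xOf_pFun, hall y]
      · intro h
        have h0 := h 0
        rw [Bool.and_eq_true, decide_eq_true_eq] at h0
        refine ⟨nOf m, xOf m, h0.1, fun y => ?_⟩
        have hy := h y
        rw [Bool.and_eq_true] at hy
        exact hy.2
  · ext i
    constructor
    · rintro ⟨j, ⟨n, x, rfl, hall⟩, hequiv⟩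
      rw [hcl]
      exact ⟨n, (hRmem n).2 ⟨x, hall⟩, by rwa [ceer_pFun] at hequiv⟩
    · intro hi
      obtain ⟨x, hx⟩ := (hRmem i).1 hi
      refine ⟨pFun i x, ⟨i, x, rfl, hx⟩, ?_⟩
      rw [ceer_pFun]
      exact ceerEquiv_refl _
end

section
/- There exists a ceer E that is not computable (i.e., the set {⟨m,n⟩ : m E n} is not computable) but each of whose equivalence classes {n : n E m} is a computable subset of ℕ. -/
open Nat.Partrec (Code)
open Nat.Partrec.Code

private def Khalt (k : ℕ) : Prop := ((Denumerable.ofNat Code k).eval 0).Dom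

private def Erel (m n : ℕ) : Prop := m = n ∨ (m / 2 = n / 2 ∧ Khalt (m / 2))

private lemma Erel_equiv : Equivalence Erel := by
  constructor
  · intro x; exact Or.inl rfl
  · rintro x y (rfl | ⟨h1, h2⟩)
    · exact Or.inl rfl
    · exact Or.inr ⟨h1.symm, h1 ▸ h2⟩
  · rintro x y z (rfl | ⟨h1, h2⟩) (rfl | ⟨h3, h4⟩)
    · exact Or.inl rfl
    · exact Or.inr ⟨h3, h4⟩
    · exact Or.inr ⟨h1, h2⟩
    · exact Or.inr ⟨h1.trans h3, h2⟩

/-- semidecision function for Erel on coded pairs -/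
private def gfun (p : ℕ) : Part ℕ :=
  cond (decide (p.unpair.1 = p.unpair.2)) (Part.some 0)
    (cond (decide (p.unpair.1 / 2 = p.unpair.2 / 2))
      ((Denumerable.ofNat Code (p.unpair.1 / 2)).eval 0) Part.none)

private lemma gfun_partrec : Partrec gfun := by
  have hu1 : Computable fun p : ℕ => p.unpair.1 :=
    (Primrec.fst.comp Primrec.unpair).to_comp
  have hu2 : Computable fun p : ℕ => p.unpair.2 :=
    (Primrec.snd.comp Primrec.unpair).to_comp
  have hd1 : Computable fun p : ℕ => p.unpair.1 / 2 :=
    (Primrec.nat_div.comp (Primrec.fst.comp Primrec.unpair) (Primrec.const 2)).to_comp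
  have hd2 : Computable fun p : ℕ => p.unpair.2 / 2 :=
    (Primrec.nat_div.comp (Primrec.snd.comp Primrec.unpair) (Primrec.const 2)).to_comp
  have hc1 : Computable fun p : ℕ => decide (p.unpair.1 = p.unpair.2) :=
    (Primrec.eq.comp (Primrec.fst.comp Primrec.unpair) (Primrec.snd.comp Primrec.unpair)).decide.to_comp
  have hc2 : Computable fun p : ℕ => decide (p.unpair.1 / 2 = p.unpair.2 / 2) :=
    (Primrec.eq.comp (Primrec.nat_div.comp (Primrec.fst.comp Primrec.unpair) (Primrec.const 2))
      (Primrec.nat_div.comp (Primrec.snd.comp Primrec.unpair) (Primrec.const 2))).decide.to_comp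
  exact Partrec.cond hc1 (Partrec.const' (Part.some 0))
    (Partrec.cond hc2
      (eval_part.comp ((Computable.ofNat Code).comp hd1) (Computable.const 0)) Partrec.none)

private lemma gfun_dom (p : ℕ) : (gfun p).Dom ↔ Erel p.unpair.1 p.unpair.2 := by
  unfold gfun Erel
  by_cases h1 : p.unpair.1 = p.unpair.2
  · simp [h1]
  · by_cases h2 : p.unpair.1 / 2 = p.unpair.2 / 2 <;> simp [h1, h2, Khalt]

/-- There is a ceer `E` (an equivalence relation on `ℕ` whose set of coded pairs is c.e.)
which is not computable but each of whose equivalence classes is computable. -/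
theorem exists_noncomputable_ceer_with_computable_classes :
    ∃ E : ℕ → ℕ → Prop, Equivalence E ∧
      (∃ e, ∀ m n, E m n ↔ Nat.pair m n ∈ W e) ∧
      ¬ComputablePred (fun p : ℕ => E p.unpair.1 p.unpair.2) ∧
      ∀ m, ComputablePred fun n => E n m := by
  refine ⟨Erel, Erel_equiv, ?_, ?_, ?_⟩
  · -- c.e.
    obtain ⟨c, hc⟩ := exists_code.1 (Partrec.nat_iff.1 gfun_partrec)
    refine ⟨Encodable.encode c, fun m n => ?_⟩
    have : Nat.pair m n ∈ W (Encodable.encode c) ↔ (gfun (Nat.pair m n)).Dom := by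
      simp [W, Denumerable.ofNat_encode, hc]
    rw [this, gfun_dom, Nat.unpair_pair]
  · -- not computable
    intro h
    obtain ⟨f, hf, hfe⟩ := ComputablePred.computable_iff.1 h
    apply ComputablePred.halting_problem 0
    have hg : Computable fun c : Code => f (Nat.pair (2 * Encodable.encode c)
        (2 * Encodable.encode c + 1)) := by
      refine hf.comp ?_
      have : Primrec fun c : Code => Nat.pair (2 * Encodable.encode c)
          (2 * Encodable.encode c + 1) :=
        Primrec₂.natPair.comp
          (Primrec.nat_mul.comp (Primrec.const 2) Primrec.encode)
          (Primrec.succ.comp (Primrec.nat_mul.comp (Primrec.const 2) Primrec.encode))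
      exact this.to_comp
    refine ComputablePred.computable_iff.2 ⟨_, hg, funext fun c => propext ?_⟩
    have hE : Erel (2 * Encodable.encode c) (2 * Encodable.encode c + 1) ↔
        (c.eval 0).Dom := by
      constructor
      · rintro (h | ⟨-, hk⟩)
        · omega
        · simpa [Khalt, Nat.mul_div_cancel_left, Denumerable.ofNat_encode] using hk
      · intro hd
        refine Or.inr ⟨by omega, ?_⟩
        simpa [Khalt, Denumerable.ofNat_encode] using hd
    have := congrFun hfe (Nat.pair (2 * Encodable.encode c) (2 * Encodable.encode c + 1))
    simp only [Nat.unpair_pair] at this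
    rw [← hE, this]
  · -- classes computable
    intro m
    by_cases hK : Khalt (m / 2)
    · refine ComputablePred.computable_iff.2 ⟨fun n => decide (n / 2 = m / 2),
        (Primrec.eq.comp (Primrec.nat_div.comp Primrec.id (Primrec.const 2))
          (Primrec.const (m / 2))).decide.to_comp, funext fun n => propext ?_⟩
      simp only [decide_eq_true_eq]
      constructor
      · rintro (rfl | ⟨h, -⟩)
        · rfl
        · exact h
      · intro h; exact Or.inr ⟨h, h ▸ hK⟩
    · refine ComputablePred.computable_iff.2 ⟨fun n => decide (n = m),
        (Primrec.eq.comp Primrec.id (Primrec.const m)).decide.to_comp, funext fun n => propext ?_⟩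
      simp only [decide_eq_true_eq]
      constructor
      · rintro (rfl | ⟨h, hk⟩)
        · rfl
        · exact absurd (h ▸ hk) hK
      · rintro rfl; exact Or.inl rfl
end

section
/- There exists a ceer E with infinitely many equivalence classes such that no ceer computably equivalent to E is the word problem of a recursively presented group. -/
/-- Code of an element of the free group on a set `X ⊆ ℕ` of generators, via its reduced
word (with each generator coded by its value in `ℕ`). -/
def encodeFGX {X : Set ℕ} (g : FreeGroup X) : ℕ :=
  Encodable.encode (g.toWord.map fun p => ((p.1 : ℕ), p.2))

/-- The relator set over generators `X ⊆ ℕ` given by the `e`-th c.e. set: elements of the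
free group on `X` whose codes lie in `W e`. -/
def relSetX (X : Set ℕ) (e : ℕ) : Set (FreeGroup X) := {g | encodeFGX g ∈ W e}

/-- Decode a natural number as an element of the free group on generators `X ⊆ ℕ`. -/
noncomputable def decodeWordX (X : Set ℕ) (m : ℕ) : FreeGroup X :=
  FreeGroup.mk
    (((Encodable.decode (α := List (ℕ × Bool)) m).getD []).filterMap fun p =>
      @dite _ (p.1 ∈ X) (Classical.dec _) (fun h => some ((⟨p.1, h⟩ : X), p.2)) fun _ => none)

/-- The word problem of the recursively presented group `⟨X ∣ relSetX X e⟩`: the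
equivalence relation on `ℕ` identifying codes of words whose images in the group coincide. -/
def wordProblemX (X : Set ℕ) (e : ℕ) : ℕ → ℕ → Prop := fun m n =>
  PresentedGroup.mk (relSetX X e) (decodeWordX X m) =
    PresentedGroup.mk (relSetX X e) (decodeWordX X n)


namespace CeerWP

/-- A halting-problem-like c.e. set. -/
def S0 : Set ℕ := {m | ((Denumerable.ofNat Nat.Partrec.Code m).eval 0).Dom}

/-- The ceer of the c.e. set `S0`: `m E0 n` iff `m = n` or both `m, n ∈ S0`. -/
def E0 (m n : ℕ) : Prop := m = n ∨ (m ∈ S0 ∧ n ∈ S0)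

theorem E0_equiv : Equivalence E0 := by
  constructor
  · exact fun _ => Or.inl rfl
  · rintro x y (rfl | ⟨h1, h2⟩)
    · exact Or.inl rfl
    · exact Or.inr ⟨h2, h1⟩
  · rintro x y z (rfl | ⟨h1, h2⟩) h
    · exact h
    · rcases h with rfl | ⟨h3, h4⟩
      · exact Or.inr ⟨h1, h2⟩
      · exact Or.inr ⟨h1, h4⟩

theorem S0_not_computable : ¬ComputablePred (· ∈ S0) := by
  intro h
  rcases ComputablePred.computable_iff.1 h with ⟨f, hf, hp⟩
  apply ComputablePred.halting_problem 0
  rw [ComputablePred.computable_iff]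
  refine ⟨fun c => f (Encodable.encode c), hf.comp Computable.encode, funext fun c => ?_⟩
  have h1 : (Encodable.encode c ∈ S0) = (f (Encodable.encode c) = true) := congrFun hp _
  simpa [S0, Denumerable.ofNat_encode] using h1

def s0 : ℕ := Encodable.encode Nat.Partrec.Code.zero

theorem s0_mem : s0 ∈ S0 := by
  show ((Denumerable.ofNat Nat.Partrec.Code s0).eval 0).Dom
  rw [s0, Denumerable.ofNat_encode]
  exact trivial

theorem mem_list_computable (l : List ℕ) : ComputablePred (fun m => m ∈ l) := by
  induction l with
  | nil =>
    exact ComputablePred.computable_iff.2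
      ⟨fun _ => false, Computable.const _, funext fun m => by simp⟩
  | cons a t ih =>
    rcases ComputablePred.computable_iff.1 ih with ⟨f, hf, hfe⟩
    refine ComputablePred.computable_iff.2
      ⟨fun m => or (decide (m = a)) (f m), ?_, funext fun m => ?_⟩
    · exact (Primrec₂.to_comp Primrec.or).comp
        ((Primrec₂.comp Primrec.eq.decide Primrec.id (Primrec.const a)).to_comp) hf
    · have ht : (m ∈ t) = (f m = true) := congrFun hfe m
      simp [List.mem_cons, Bool.or_eq_true, decide_eq_true_iff, ht]

theorem S0_compl_infinite : {m : ℕ | m ∉ S0}.Infinite := by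
  by_contra h
  rw [Set.not_infinite] at h
  apply S0_not_computable
  set l := h.toFinset.toList with hl
  have hmem : ∀ m, m ∈ S0 ↔ ¬ (m ∈ l) := by
    intro m
    rw [hl]
    simp [Set.Finite.mem_toFinset]
  rcases ComputablePred.computable_iff.1 (mem_list_computable l).not with ⟨f, hf, hfe⟩
  refine ComputablePred.computable_iff.2 ⟨f, hf, funext fun m => ?_⟩
  have h1 : (¬ (m ∈ l)) = (f m = true) := congrFun hfe m
  rw [← h1]
  exact propext (hmem m)

theorem E0_inf : HasInfinitelyManyClasses E0 := by
  refine ⟨fun n => ((Set.Infinite.natEmbedding _ S0_compl_infinite) n : ℕ),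
    fun m n hmn hE => ?_⟩
  rcases hE with h | h
  · exact hmn ((Set.Infinite.natEmbedding _ S0_compl_infinite).injective (Subtype.ext h))
  · exact ((Set.Infinite.natEmbedding _ S0_compl_infinite) m).2 h.1

theorem E0_ceer : ∃ e, ∀ m n, E0 m n ↔ Nat.pair m n ∈ W e := by
  have hS : Partrec fun m : ℕ => (Denumerable.ofNat Nat.Partrec.Code m).eval 0 :=
    Nat.Partrec.Code.eval_part.comp ((Primrec.ofNat _).to_comp) (Computable.const 0)
  have h1 : Partrec fun p : ℕ =>
      ((bif decide (p.unpair.1 = p.unpair.2) then some 0 else none : Option ℕ) : Part ℕ) :=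
    Computable.ofOption (Computable.cond
      ((Primrec₂.comp Primrec.eq.decide (Primrec.fst.comp Primrec.unpair)
        (Primrec.snd.comp Primrec.unpair)).to_comp)
      (Computable.const (some 0)) (Computable.const none))
  have h2 : Partrec fun p : ℕ =>
      ((Denumerable.ofNat Nat.Partrec.Code p.unpair.1).eval 0).bind
        (fun _ => (Denumerable.ofNat Nat.Partrec.Code p.unpair.2).eval 0) := by
    apply Partrec.bind
    · exact hS.comp ((Primrec.fst.comp Primrec.unpair).to_comp)
    · exact Partrec.to₂ (hS.comp ((Primrec.snd.comp (Primrec.unpair.comp Primrec.fst)).to_comp))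
  obtain ⟨k, hk, hkspec⟩ := Partrec.merge' h1 h2
  obtain ⟨c, hc⟩ := Nat.Partrec.Code.exists_code.1 (Partrec.nat_iff.1 hk)
  refine ⟨Encodable.encode c, fun m n => ?_⟩
  have hW : (Nat.pair m n ∈ W (Encodable.encode c)) ↔ (k (Nat.pair m n)).Dom := by
    show ((Denumerable.ofNat Nat.Partrec.Code (Encodable.encode c)).eval (Nat.pair m n)).Dom ↔ _
    rw [Denumerable.ofNat_encode, hc]
  rw [hW, (hkspec _).2]
  have d1 : ∀ p : ℕ,
      ((bif decide (p.unpair.1 = p.unpair.2) then some 0 else none : Option ℕ) : Part ℕ).Dom ↔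
        p.unpair.1 = p.unpair.2 := by
    intro p
    by_cases h : p.unpair.1 = p.unpair.2 <;> simp [h]
  have d2 : ∀ p : ℕ,
      (((Denumerable.ofNat Nat.Partrec.Code p.unpair.1).eval 0).bind
        (fun _ => (Denumerable.ofNat Nat.Partrec.Code p.unpair.2).eval 0)).Dom ↔
        (p.unpair.1 ∈ S0 ∧ p.unpair.2 ∈ S0) := by
    intro p
    rw [Part.bind_dom]
    exact exists_prop
  rw [d1, d2, Nat.unpair_pair]
  rfl

/-- Decode a number to a word over `ℕ`. -/
def decL (m : ℕ) : List (ℕ × Bool) := (Encodable.decode (α := List (ℕ × Bool)) m).getD []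

/-- The letter-filtering map used by `decodeWordX`. -/
noncomputable def sig (X : Set ℕ) : ℕ × Bool → Option (X × Bool) := fun p =>
  @dite _ (p.1 ∈ X) (Classical.dec _) (fun h => some ((⟨p.1, h⟩ : X), p.2)) fun _ => none

theorem decodeWordX_eq (X : Set ℕ) (m : ℕ) :
    decodeWordX X m = FreeGroup.mk ((decL m).filterMap (sig X)) := rfl

/-- Code of concatenation of words. -/
def mulC (a b : ℕ) : ℕ := Encodable.encode (decL a ++ decL b)

/-- Code of the formal inverse of a word. -/
def invC (a : ℕ) : ℕ := Encodable.encode (FreeGroup.invRev (decL a))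

/-- Code of the empty word. -/
def c0 : ℕ := Encodable.encode ([] : List (ℕ × Bool))

theorem decL_encode (l : List (ℕ × Bool)) : decL (Encodable.encode l) = l := by
  simp [decL, Encodable.encodek]

theorem decode_mulC (X : Set ℕ) (a b : ℕ) :
    decodeWordX X (mulC a b) = decodeWordX X a * decodeWordX X b := by
  rw [decodeWordX_eq, decodeWordX_eq, decodeWordX_eq, mulC, decL_encode,
    List.filterMap_append, FreeGroup.mul_mk]

theorem sig_flip (X : Set ℕ) (p : ℕ × Bool) :
    sig X (p.1, !p.2) = Option.map (fun g : X × Bool => (g.1, !g.2)) (sig X p) := by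
  rcases p with ⟨x, b⟩
  by_cases h : x ∈ X <;> simp [sig, h]

theorem decode_invC (X : Set ℕ) (a : ℕ) :
    decodeWordX X (invC a) = (decodeWordX X a)⁻¹ := by
  rw [decodeWordX_eq, decodeWordX_eq, invC, decL_encode, FreeGroup.inv_mk]
  congr 1
  unfold FreeGroup.invRev
  rw [List.filterMap_reverse, List.filterMap_map, List.map_filterMap]
  have hfun : (sig X ∘ fun g : ℕ × Bool => (g.1, !g.2)) =
      fun x => Option.map (fun g : X × Bool => (g.1, !g.2)) (sig X x) := by
    funext p
    simpa using sig_flip X p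
  rw [hfun]

theorem decode_c0 (X : Set ℕ) : decodeWordX X c0 = 1 := by
  rw [decodeWordX_eq, c0, decL_encode, List.filterMap_nil, ← FreeGroup.one_eq_mk]

theorem wp_iff_mul_inv (X : Set ℕ) (e x y : ℕ) :
    wordProblemX X e x y ↔ wordProblemX X e (mulC x (invC y)) c0 := by
  unfold wordProblemX
  rw [decode_mulC, decode_invC, decode_c0, map_mul, map_inv, map_one]
  exact mul_inv_eq_one.symm

theorem wp_mul_right (X : Set ℕ) (e x a : ℕ) :
    wordProblemX X e (mulC x a) a ↔ wordProblemX X e x c0 := by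
  unfold wordProblemX
  rw [decode_mulC, decode_c0, map_mul, map_one]
  exact mul_eq_right

theorem wp_trans {X : Set ℕ} {e a b c : ℕ} (h1 : wordProblemX X e a b)
    (h2 : wordProblemX X e b c) : wordProblemX X e a c := by
  unfold wordProblemX at h1 h2 ⊢
  exact h1.trans h2

theorem decL_primrec : Primrec decL :=
  Primrec₂.comp Primrec.option_getD Primrec.decode (Primrec.const [])

theorem mulC_primrec : Primrec₂ mulC :=
  Primrec.to₂ (Primrec.encode.comp (Primrec₂.comp Primrec.list_append
    (decL_primrec.comp Primrec.fst) (decL_primrec.comp Primrec.snd)))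

/-- The main diagonal argument: `E0` is not computably equivalent to the word problem of
any recursively presented group.  Indeed, all classes of `E0` other than the class of `S0`
are singletons, so the backward reduction `Ψ` literally classifies group elements outside
of (at most) one exceptional class.  Using the computable word operations on codes, this
makes the identity class of the group, hence the whole word problem, hence `S0`, decidable,
a contradiction. -/
theorem main (X : Set ℕ) (hX : ComputablePred (· ∈ X)) (e : ℕ) :
    ¬CeerEquiv E0 (wordProblemX X e) := by
  rintro ⟨⟨Φ, hΦc, hΦ⟩, ⟨Ψ, hΨc, hΨ⟩⟩
  obtain ⟨f, hf⟩ := E0_inf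
  have h01 : ¬ E0 (f 0) (f 1) := hf 0 1 (by norm_num)
  -- In either case there is a fixed `a` such that `x` is in the identity class iff
  -- `Ψ (x * a)` literally equals `Ψ a`.
  obtain ⟨a, ha⟩ : ∃ a, ∀ x, wordProblemX X e x c0 ↔ Ψ (mulC x a) = Ψ a := by
    by_cases hB : ∃ x₀, wordProblemX X e x₀ c0 ∧ Ψ x₀ ∈ S0
    · obtain ⟨x₀, hx₀F, hx₀S⟩ := hB
      refine ⟨mulC (Φ (f 0)) (invC (Φ (f 1))), fun x => ?_⟩
      set a := mulC (Φ (f 0)) (invC (Φ (f 1))) with haa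
      have hano : ¬ wordProblemX X e a c0 := by
        intro hc
        exact h01 ((hΦ _ _).2 ((wp_iff_mul_inv X e (Φ (f 0)) (Φ (f 1))).2 hc))
      have f2 : Ψ a ∉ S0 := by
        intro hS
        exact hano (wp_trans ((hΨ _ _).2 (Or.inr ⟨hS, hx₀S⟩)) hx₀F)
      constructor
      · intro hx
        have hE : E0 (Ψ (mulC x a)) (Ψ a) := (hΨ _ _).1 ((wp_mul_right X e x a).2 hx)
        rcases hE with h | h
        · exact h
        · exact absurd h.2 f2
      · intro hx
        exact (wp_mul_right X e x a).1 ((hΨ _ _).2 (Or.inl hx))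
    · push_neg at hB
      refine ⟨c0, fun x => ?_⟩
      constructor
      · intro hx
        have h1 : wordProblemX X e (mulC x c0) c0 := (wp_mul_right X e x c0).2 hx
        have hE : E0 (Ψ (mulC x c0)) (Ψ c0) := (hΨ _ _).1 h1
        rcases hE with h | h
        · exact h
        · exact absurd h.1 (hB _ h1)
      · intro hx
        exact (wp_mul_right X e x c0).1 ((hΨ _ _).2 (Or.inl hx))
  -- This yields a decision procedure for membership in `S0`.
  apply S0_not_computable
  rw [ComputablePred.computable_iff]
  refine ⟨fun m => decide (Ψ (mulC (mulC (Φ m) (invC (Φ s0))) a) = Ψ a), ?_, funext fun m => ?_⟩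
  · have hmul : Computable₂ mulC := mulC_primrec.to_comp
    exact (Primrec.eq.decide.to_comp).comp
      (hΨc.comp (hmul.comp (hmul.comp hΦc (Computable.const (invC (Φ s0))))
        (Computable.const a)))
      (Computable.const (Ψ a))
  · have chain : m ∈ S0 ↔ Ψ (mulC (mulC (Φ m) (invC (Φ s0))) a) = Ψ a := by
      have c1 : m ∈ S0 ↔ E0 m s0 :=
        ⟨fun h => Or.inr ⟨h, s0_mem⟩, fun h => h.elim (fun he => he ▸ s0_mem) And.left⟩
      exact c1.trans ((hΦ m s0).trans ((wp_iff_mul_inv X e (Φ m) (Φ s0)).trans (ha _)))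
    exact propext (chain.trans decide_eq_true_iff.symm)

end CeerWP

/-- There is a ceer `E` with infinitely many classes such that no ceer computably
equivalent to `E` is the word problem of a recursively presented group. -/
theorem exists_ceer_not_equivalent_to_any_wordProblem :
    ∃ E : ℕ → ℕ → Prop, Equivalence E ∧
      (∃ e, ∀ m n, E m n ↔ Nat.pair m n ∈ W e) ∧
      HasInfinitelyManyClasses E ∧
      ∀ X : Set ℕ, ComputablePred (· ∈ X) → ∀ e, ¬CeerEquiv E (wordProblemX X e) :=
  ⟨CeerWP.E0, CeerWP.E0_equiv, CeerWP.E0_ceer, CeerWP.E0_inf, CeerWP.main⟩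
end
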